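/- The degree of the natural projection ℂ² → X((d;a,b),(e;r,s)) (the quotient of ℂ² by the action of μ_d × μ_e with weight matrix rows (a,b) and (r,s)) equals d·e / gcd(d·gcd(e,r,s), e·gcd(d,a,b), a·s − b·r). -/

import Mathlib

open Finset

private lemma count_mod_eq (m : ℕ) (hm : 0 < m) (w : ℕ) (hw : w < m) (n : ℕ) (hmn : m ∣ n) :
    ((Finset.range n).filter fun x => x % m = w).card = n / m := by
  rw [← Finset.card_range (n / m)]
  apply Finset.card_bij' (fun x _ => x / m) (fun k _ => m * k + w)
  · intro x hx
    simp only [mem_filter, mem_range] at hx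
    exact Finset.mem_range.mpr (Nat.div_lt_div_of_lt_of_dvd hmn hx.1)
  · intro k hk
    simp only [mem_range] at hk
    simp only [mem_filter, mem_range]
    constructor
    · have : m * (k + 1) ≤ m * (n / m) := Nat.mul_le_mul_left m hk
      rw [Nat.mul_succ] at this
      have h2 : m * (n / m) = n := Nat.mul_div_cancel' hmn
      omega
    · simp [Nat.mul_add_mod, Nat.mod_eq_of_lt hw]
  · intro x hx
    simp only [mem_filter, mem_range] at hx
    have := Nat.div_add_mod x m
    omega
  · intro k hk
    simp only [mem_range] at hk
    rw [Nat.mul_add_div hm, Nat.div_eq_of_lt hw]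
    omega

private lemma count_dvd_add (m : ℕ) (hm : 0 < m) (w : ℤ) (n : ℕ) (hmn : m ∣ n) :
    ((Finset.range n).filter fun x : ℕ => (m:ℤ) ∣ (x:ℤ) + w).card = n / m := by
  set w₀ : ℕ := ((-w) % m).toNat with hw₀
  have hmz : (0:ℤ) < (m:ℤ) := by exact_mod_cast hm
  have hnn : 0 ≤ (-w) % m := Int.emod_nonneg _ (by positivity)
  have hlt : (-w) % m < m := Int.emod_lt_of_pos _ hmz
  have hw0 : (w₀ : ℤ) = (-w) % m := Int.toNat_of_nonneg hnn
  have hwlt : w₀ < m := by omega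
  have hcongr : ((Finset.range n).filter fun x : ℕ => (m:ℤ) ∣ (x:ℤ) + w)
      = ((Finset.range n).filter fun x : ℕ => x % m = w₀) := by
    apply Finset.filter_congr
    intro x _
    have hdvd : (m:ℤ) ∣ (w₀:ℤ) + w := by
      rw [hw0, Int.emod_def]
      exact ⟨-((-w)/m), by ring⟩
    obtain ⟨c2, hc2⟩ := hdvd
    constructor
    · intro h
      obtain ⟨c1, hc1⟩ := h
      have h2 : (m:ℤ) ∣ (x:ℤ) - (w₀:ℤ) := ⟨c1 - c2, by linarith⟩
      have h3 : w₀ ≡ x [MOD m] := Nat.modEq_iff_dvd.mpr h2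
      have h4 : x % m = w₀ % m := h3.symm
      rw [Nat.mod_eq_of_lt hwlt] at h4
      exact h4
    · intro h
      have h3 : w₀ ≡ x [MOD m] := by
        show w₀ % m = x % m
        rw [h, Nat.mod_eq_of_lt hwlt]
      obtain ⟨c1, hc1⟩ := Nat.modEq_iff_dvd.mp h3
      exact ⟨c1 + c2, by linarith⟩
  rw [hcongr]
  exact count_mod_eq m hm w₀ hwlt n hmn

private lemma count_cong (m : ℕ) (hm : 0 < m) (c t : ℤ) (n : ℕ) (hmn : (m:ℤ) ∣ c * n) :
    ((Finset.range n).filter fun x : ℕ => (m:ℤ) ∣ c * x + t).card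
      = if ((Int.gcd m c : ℤ) ∣ t) then n * Int.gcd m c / m else 0 := by
  have hgm : ((Int.gcd m c : ℤ)) ∣ (m:ℤ) := Int.gcd_dvd_left _ _
  have hgc : ((Int.gcd m c : ℤ)) ∣ c := Int.gcd_dvd_right _ _
  have hmne : (m:ℤ) ≠ 0 := by exact_mod_cast hm.ne'
  have hgpos : 0 < Int.gcd m c := Int.gcd_pos_of_ne_zero_left c hmne
  by_cases hgt : ((Int.gcd m c : ℤ) ∣ t)
  · have hcop0 : Int.gcd ((m:ℤ) / (Int.gcd m c : ℤ)) (c / (Int.gcd m c : ℤ)) = 1 :=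
      Int.gcd_div_gcd_div_gcd hgpos
    have hgmn : Int.gcd m c ∣ m := by exact_mod_cast hgm
    set G := Int.gcd (m:ℤ) c with hG
    obtain ⟨m₁, hmeq⟩ := hgmn
    obtain ⟨c₁, hceq⟩ := hgc
    obtain ⟨t₁, hteq⟩ := hgt
    have hgz : (0:ℤ) < (G : ℤ) := by exact_mod_cast hgpos
    have hm₁pos : 0 < m₁ := by
      rcases Nat.eq_zero_or_pos m₁ with h | h
      · rw [h, Nat.mul_zero] at hmeq; omega
      · exact h
    have hmz : (m:ℤ) = (G : ℤ) * (m₁:ℤ) := by exact_mod_cast hmeq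
    have e1 : (m:ℤ) / (G : ℤ) = (m₁:ℤ) := by
      rw [hmz]; exact Int.mul_ediv_cancel_left _ hgz.ne'
    have e2 : c / (G : ℤ) = c₁ := by
      rw [hceq]; exact Int.mul_ediv_cancel_left _ hgz.ne'
    rw [e1, e2] at hcop0
    have hcopC : IsCoprime ((m₁:ℤ)) c₁ := Int.isCoprime_iff_gcd_eq_one.mpr hcop0
    obtain ⟨u, v, huv⟩ := id hcopC
    -- u * m₁ + v * c₁ = 1
    have hm₁n : m₁ ∣ n := by
      have h1 : ((m₁:ℤ)) ∣ c₁ * n := by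
        have h0 : ((G : ℤ) * (m₁:ℤ)) ∣ (G : ℤ) * (c₁ * n) := by
          rw [← hmz, show (G : ℤ) * (c₁ * n) = ((G:ℤ) * c₁) * n by ring, ← hceq]
          exact hmn
        exact (mul_dvd_mul_iff_left hgz.ne').mp h0
      exact_mod_cast hcopC.dvd_of_dvd_mul_left h1
    have hiff : ∀ x : ℕ, ((m:ℤ) ∣ c * x + t) ↔ ((m₁:ℤ) ∣ (x:ℤ) + v * t₁) := by
      intro x
      have step1 : ((m:ℤ) ∣ c * x + t) ↔ ((m₁:ℤ) ∣ c₁ * x + t₁) := by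
        rw [hmz, hceq, hteq,
          show (G : ℤ) * c₁ * ↑x + (G : ℤ) * t₁ = (G : ℤ) * (c₁ * x + t₁) by ring]
        exact mul_dvd_mul_iff_left hgz.ne'
      rw [step1]
      constructor
      · rintro ⟨k, hk⟩
        exact ⟨v * k + u * x, by linear_combination (v : ℤ) * hk - (x:ℤ) * huv⟩
      · rintro ⟨k, hk⟩
        exact ⟨c₁ * k + u * t₁, by linear_combination (c₁ : ℤ) * hk - (t₁:ℤ) * huv⟩
    rw [if_pos ⟨t₁, hteq⟩]
    calc ((Finset.range n).filter fun x : ℕ => (m:ℤ) ∣ c * x + t).card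
        = ((Finset.range n).filter fun x : ℕ => (m₁:ℤ) ∣ (x:ℤ) + v * t₁).card := by
          exact congrArg Finset.card (Finset.filter_congr fun x _ => hiff x)
      _ = n / m₁ := count_dvd_add m₁ hm₁pos (v * t₁) n hm₁n
      _ = n * G / m := by
          rw [hmeq, show n * G = G * n by ring, Nat.mul_div_mul_left n m₁ hgpos]
  · rw [if_neg hgt, Finset.card_eq_zero, Finset.filter_eq_empty_iff]
    intro x _ hx
    apply hgt
    have h2 : ((Int.gcd m c : ℤ)) ∣ (c * x + t) - c * x :=
      dvd_sub (hgm.trans hx) (hgc.mul_right _)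
    simpa using h2


private def cnt (d e : ℕ) (a r b s : ℤ) : ℕ :=
  ((Finset.range d ×ˢ Finset.range e).filter fun p =>
    ((d*e : ℤ) ∣ a*e*p.1 + r*d*p.2) ∧ ((d*e : ℤ) ∣ b*e*p.1 + s*d*p.2)).card

private def gfun (d e : ℕ) (a r b s : ℤ) : ℕ :=
  Nat.gcd (d * Int.gcd (Int.gcd (e : ℤ) r) s)
    (Nat.gcd (e * Int.gcd (Int.gcd (d : ℤ) a) b) (Int.natAbs (a * s - b * r)))

private lemma cnt_swap (d e : ℕ) (a r b s : ℤ) : cnt d e a r b s = cnt d e b s a r := by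
  unfold cnt
  exact congrArg Finset.card (Finset.filter_congr fun p _ => and_comm)

private lemma cnt_rowadd (d e : ℕ) (a r b s k : ℤ) :
    cnt d e a r (b + k*a) (s + k*r) = cnt d e a r b s := by
  unfold cnt
  refine congrArg Finset.card (Finset.filter_congr fun p _ => ?_)
  refine and_congr_right fun h1 => ?_
  rw [show (b + k*a)*e*p.1 + (s + k*r)*d*p.2
      = k * (a*e*p.1 + r*d*p.2) + (b*e*p.1 + s*d*p.2) by ring]
  exact dvd_add_right (h1.mul_left k)

private lemma int_gcd_add_mul_of_dvd {g a : ℤ} (h : g ∣ a) (b k : ℤ) :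
    Int.gcd g (b + k*a) = Int.gcd g b := by
  apply Nat.dvd_antisymm
  · rw [← Int.natCast_dvd_natCast]
    refine Int.dvd_coe_gcd (Int.gcd_dvd_left _ _) ?_
    have h1 : ((Int.gcd g (b + k*a) : ℤ)) ∣ (b + k*a) := Int.gcd_dvd_right _ _
    have h2 : ((Int.gcd g (b + k*a) : ℤ)) ∣ k*a := ((Int.gcd_dvd_left _ _).trans h).mul_left k
    simpa using dvd_sub h1 h2
  · rw [← Int.natCast_dvd_natCast]
    refine Int.dvd_coe_gcd (Int.gcd_dvd_left _ _) ?_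
    exact dvd_add (Int.gcd_dvd_right _ _) (((Int.gcd_dvd_left _ _).trans h).mul_left k)

private lemma gfun_swap (d e : ℕ) (a r b s : ℤ) : gfun d e a r b s = gfun d e b s a r := by
  unfold gfun
  rw [show Int.gcd (Int.gcd (e:ℤ) s) r = Int.gcd (Int.gcd (e:ℤ) r) s by
      rw [Int.gcd_assoc, Int.gcd_comm s r, ← Int.gcd_assoc],
    show Int.gcd (Int.gcd (d:ℤ) b) a = Int.gcd (Int.gcd (d:ℤ) a) b by
      rw [Int.gcd_assoc, Int.gcd_comm b a, ← Int.gcd_assoc],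
    show (b*r - a*s).natAbs = (a*s - b*r).natAbs by
      rw [show b*r - a*s = -(a*s - b*r) by ring, Int.natAbs_neg]]

private lemma gfun_rowadd (d e : ℕ) (a r b s k : ℤ) :
    gfun d e a r (b + k*a) (s + k*r) = gfun d e a r b s := by
  unfold gfun
  rw [int_gcd_add_mul_of_dvd (Int.gcd_dvd_right (a := (e:ℤ)) (b := r)) s k,
    int_gcd_add_mul_of_dvd (Int.gcd_dvd_right (a := (d:ℤ)) (b := a)) b k,
    show a*(s + k*r) - (b + k*a)*r = a*s - b*r by ring]

private lemma cnt_b0s0 (d g : ℕ) (hd : 0 < d) (hg : 0 < g) (a r : ℤ) :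
    cnt d g a r 0 0 = Nat.gcd (Int.gcd (d:ℤ) a * g) ((r*(d:ℤ)).natAbs) := by
  set A := Int.gcd (d:ℤ) a with hA
  have hApos : 0 < A := Int.gcd_pos_of_ne_zero_left a (by exact_mod_cast hd.ne')
  have hAd : A ∣ d := by exact_mod_cast (Int.gcd_dvd_left _ _ : ((A:ℕ):ℤ) ∣ (d:ℤ))
  obtain ⟨d₁, hd₁⟩ := hAd
  have key : ∀ y : ℕ, ((Finset.range d).filter
      fun x : ℕ => ((d:ℤ)*(g:ℤ)) ∣ a*g*x + r*d*y).card
      = if (((A*g : ℕ):ℤ) ∣ r*(d:ℤ)*y) then A else 0 := by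
    intro y
    have hcg : Int.gcd ((d:ℤ)*(g:ℤ)) (a*(g:ℤ)) = A*g := by
      rw [Int.gcd_mul_right]; simp [hA]
    have h := count_cong (d*g) (by positivity) (a*g) (r*d*y) d ⟨a, by push_cast; ring⟩
    rw [Nat.cast_mul] at h
    rw [h, hcg]
    congr 1
    rw [show d * (A*g) = A * (d*g) by ring]
    exact Nat.mul_div_cancel _ (by positivity)
  have hAh : A ∣ Nat.gcd (A*g) ((r*(d:ℤ)).natAbs) := by
    refine Nat.dvd_gcd (dvd_mul_right A g) ?_
    rw [Int.natAbs_mul]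
    simpa using Dvd.dvd.mul_left (⟨d₁, hd₁⟩ : A ∣ d) r.natAbs
  calc cnt d g a r 0 0
      = ((Finset.range d ×ˢ Finset.range g).filter
          fun p => ((d:ℤ)*(g:ℤ)) ∣ a*g*p.1 + r*d*p.2).card := by
        unfold cnt
        exact congrArg Finset.card (Finset.filter_congr fun p _ => by simp)
    _ = ∑ y ∈ Finset.range g, ((Finset.range d).filter
          fun x : ℕ => ((d:ℤ)*(g:ℤ)) ∣ a*g*x + r*d*y).card := by
        rw [Finset.card_filter, Finset.sum_product_right]
        exact Finset.sum_congr rfl fun y _ => (Finset.card_filter _ _).symm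
    _ = ∑ y ∈ Finset.range g, (A * if (((A*g : ℕ):ℤ) ∣ r*(d:ℤ)*y) then 1 else 0) := by
        refine Finset.sum_congr rfl fun y _ => ?_
        rw [key y, mul_ite, mul_one, mul_zero]
    _ = A * ((Finset.range g).filter
          fun y : ℕ => ((A*g : ℕ):ℤ) ∣ r*(d:ℤ)*y + 0).card := by
        rw [← Finset.mul_sum, Finset.card_filter]
        refine congrArg _ (Finset.sum_congr rfl fun y _ => by rw [add_zero])
    _ = Nat.gcd (A*g) ((r*(d:ℤ)).natAbs) := by
        rw [count_cong (A*g) (by positivity) (r*(d:ℤ)) 0 g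
          ⟨r*d₁, by push_cast [hd₁]; ring⟩]
        rw [if_pos (dvd_zero _)]
        have hgcd : Int.gcd ((A*g : ℕ):ℤ) (r*(d:ℤ)) = Nat.gcd (A*g) ((r*(d:ℤ)).natAbs) := by
          rw [Int.gcd]; simp [Int.natAbs_mul]
        have hdiv : ∀ X, g * X / (A*g) = X / A := fun X => by
          rw [mul_comm A g]; exact Nat.mul_div_mul_left X A hg
        rw [hgcd, hdiv, Nat.mul_div_cancel' hAh]

private lemma cnt_b0 (d e : ℕ) (hd : 0 < d) (he : 0 < e) (a r s : ℤ) :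
    cnt d e a r 0 s = cnt d (Int.gcd (e:ℤ) s) a r 0 0 := by
  set g := Int.gcd (e:ℤ) s with hgdef
  have hene : (e:ℤ) ≠ 0 := by exact_mod_cast he.ne'
  have hgpos : 0 < g := Int.gcd_pos_of_ne_zero_left s hene
  have hge : g ∣ e := by exact_mod_cast (Int.gcd_dvd_left _ _ : ((g:ℕ):ℤ) ∣ (e:ℤ))
  have hgs : ((g:ℕ):ℤ) ∣ s := Int.gcd_dvd_right _ _
  have hcop0 := Int.gcd_div_gcd_div_gcd (i := (e:ℤ)) (j := s) hgpos
  obtain ⟨e₁, he₁⟩ := hge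
  obtain ⟨s₁, hs₁⟩ := hgs
  have he₁pos : 0 < e₁ := by
    rcases Nat.eq_zero_or_pos e₁ with h | h
    · rw [h, mul_zero] at he₁; omega
    · exact h
  have hez : (e:ℤ) = (g:ℤ)*(e₁:ℤ) := by exact_mod_cast he₁
  have hgz : ((g:ℤ)) ≠ 0 := by exact_mod_cast hgpos.ne'
  have e1 : (e:ℤ)/(g:ℤ) = e₁ := by rw [hez]; exact Int.mul_ediv_cancel_left _ hgz
  have e2 : s/(g:ℤ) = s₁ := by rw [hs₁]; exact Int.mul_ediv_cancel_left _ hgz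
  rw [e1, e2] at hcop0
  have hcopC : IsCoprime ((e₁:ℤ)) s₁ := Int.isCoprime_iff_gcd_eq_one.mpr hcop0
  have iff2 : ∀ y : ℕ, (((d:ℤ)*(e:ℤ)) ∣ s*(d:ℤ)*(y:ℤ)) ↔ e₁ ∣ y := by
    intro y
    constructor
    · intro h
      have h1 : (e:ℤ) ∣ s*y := by
        have h0 : (d:ℤ)*(e:ℤ) ∣ (d:ℤ)*(s*y) := by
          rw [show (d:ℤ)*(s*(y:ℤ)) = s*(d:ℤ)*(y:ℤ) by ring]; exact h
        exact (mul_dvd_mul_iff_left (show (d:ℤ) ≠ 0 by exact_mod_cast hd.ne')).mp h0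
      have h2 : (e₁:ℤ) ∣ s₁*y := by
        have h0 : (g:ℤ)*(e₁:ℤ) ∣ (g:ℤ)*(s₁*y) := by
          rw [← hez, show (g:ℤ)*(s₁*(y:ℤ)) = ((g:ℤ)*s₁)*(y:ℤ) by ring, ← hs₁]; exact h1
        exact (mul_dvd_mul_iff_left hgz).mp h0
      exact_mod_cast hcopC.dvd_of_dvd_mul_left h2
    · rintro ⟨k, hk⟩
      refine ⟨s₁*k, ?_⟩
      rw [hs₁, hez, show (y:ℤ) = ((y:ℕ):ℤ) from rfl]
      rw [show ((y:ℕ):ℤ) = ((e₁ * k : ℕ):ℤ) by exact_mod_cast congrArg (Nat.cast : ℕ → ℤ) hk]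
      push_cast
      ring
  have iff1 : ∀ x k : ℕ, (((d:ℤ)*(e:ℤ)) ∣ a*(e:ℤ)*x + r*(d:ℤ)*((k*e₁ : ℕ):ℤ)) ↔
      (((d:ℤ)*(g:ℤ)) ∣ a*(g:ℤ)*x + r*(d:ℤ)*k) := by
    intro x k
    rw [show ((k*e₁ : ℕ):ℤ) = (k:ℤ)*(e₁:ℤ) by push_cast; ring, hez,
      show a*((g:ℤ)*(e₁:ℤ))*(x:ℤ) + r*(d:ℤ)*((k:ℤ)*(e₁:ℤ))
        = (e₁:ℤ)*(a*(g:ℤ)*(x:ℤ) + r*(d:ℤ)*(k:ℤ)) by ring,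
      show (d:ℤ)*((g:ℤ)*(e₁:ℤ)) = (e₁:ℤ)*((d:ℤ)*(g:ℤ)) by ring]
    exact mul_dvd_mul_iff_left (show (e₁:ℤ) ≠ 0 by exact_mod_cast he₁pos.ne')
  unfold cnt
  have hBig : ((Finset.range d ×ˢ Finset.range e).filter fun p =>
      ((d*e : ℤ) ∣ a*e*p.1 + r*d*p.2) ∧ ((d*e : ℤ) ∣ 0*e*p.1 + s*d*p.2))
      = ((Finset.range d ×ˢ Finset.range e).filter fun p =>
      ((d*e : ℤ) ∣ a*e*p.1 + r*d*p.2) ∧ e₁ ∣ p.2) := by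
    refine Finset.filter_congr fun p _ => ?_
    refine and_congr_right fun _ => ?_
    rw [show (0:ℤ)*e*p.1 + s*d*p.2 = s*(d:ℤ)*p.2 by ring]
    exact iff2 p.2
  have hSmall : ((Finset.range d ×ˢ Finset.range g).filter fun p =>
      ((d*g : ℤ) ∣ a*g*p.1 + r*d*p.2) ∧ ((d*g : ℤ) ∣ 0*g*p.1 + 0*d*p.2))
      = ((Finset.range d ×ˢ Finset.range g).filter fun p =>
      ((d*g : ℤ) ∣ a*g*p.1 + r*d*p.2)) := by
    refine Finset.filter_congr fun p _ => ?_
    simp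
  rw [hBig, hSmall]
  refine Finset.card_bij' (fun p (_ : p ∈ _) => (p.1, p.2 / e₁))
    (fun q (_ : q ∈ _) => (q.1, q.2 * e₁)) ?hi ?hj ?li ?ri
  case hi =>
    intro p hp
    simp only [Finset.mem_filter, Finset.mem_product, Finset.mem_range] at hp ⊢
    obtain ⟨⟨hx, hy⟩, hc1, k, hk⟩ := hp
    refine ⟨⟨hx, ?_⟩, ?_⟩
    · rw [hk, Nat.mul_div_cancel_left k he₁pos]
      have h4 : e₁ * k < g * e₁ := by rw [← he₁]; omega
      nlinarith [he₁pos]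
    · rw [hk, Nat.mul_div_cancel_left k he₁pos]
      exact (iff1 p.1 k).mp (by rw [show k * e₁ = e₁ * k by ring, ← hk]; exact hc1)
  case hj =>
    intro q hq
    simp only [Finset.mem_filter, Finset.mem_product, Finset.mem_range] at hq ⊢
    obtain ⟨⟨hx, hk⟩, hc1⟩ := hq
    refine ⟨⟨hx, ?_⟩, (iff1 q.1 q.2).mpr hc1, ⟨q.2, mul_comm q.2 e₁⟩⟩
    rw [he₁]
    have h5 : q.2 + 1 ≤ g := hk
    nlinarith [he₁pos]
  case li =>
    intro p hp
    simp only [Finset.mem_filter, Finset.mem_product, Finset.mem_range] at hp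
    obtain ⟨⟨hx, hy⟩, hc1, k, hk⟩ := hp
    have h6 : p.2 / e₁ * e₁ = p.2 := by rw [hk, Nat.mul_div_cancel_left k he₁pos, mul_comm]
    show (p.1, p.2 / e₁ * e₁) = p
    rw [h6]
  case ri =>
    intro q hq
    show (q.1, q.2 * e₁ / e₁) = q
    rw [Nat.mul_div_cancel q.2 he₁pos]


private lemma gcd_identity (d e a r s : ℕ) :
    Nat.gcd (Nat.gcd d a * Nat.gcd e s) (r * d)
      = Nat.gcd (d * Nat.gcd (Nat.gcd e r) s) (Nat.gcd (e * Nat.gcd d a) (a * s)) := by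
  apply Nat.dvd_antisymm
  · have L1 : Nat.gcd (Nat.gcd d a * Nat.gcd e s) (r * d) ∣ d * e :=
      (Nat.gcd_dvd_left _ _).trans (mul_dvd_mul (Nat.gcd_dvd_left d a) (Nat.gcd_dvd_left e s))
    have L2 : Nat.gcd (Nat.gcd d a * Nat.gcd e s) (r * d) ∣ d * r := by
      rw [mul_comm d r]; exact Nat.gcd_dvd_right _ _
    have L3 : Nat.gcd (Nat.gcd d a * Nat.gcd e s) (r * d) ∣ d * s :=
      (Nat.gcd_dvd_left _ _).trans (mul_dvd_mul (Nat.gcd_dvd_left d a) (Nat.gcd_dvd_right e s))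
    have L4 : Nat.gcd (Nat.gcd d a * Nat.gcd e s) (r * d) ∣ e * Nat.gcd d a := by
      rw [mul_comm e (Nat.gcd d a)]
      exact (Nat.gcd_dvd_left _ _).trans (mul_dvd_mul_left _ (Nat.gcd_dvd_left e s))
    have L5 : Nat.gcd (Nat.gcd d a * Nat.gcd e s) (r * d) ∣ a * s :=
      (Nat.gcd_dvd_left _ _).trans (mul_dvd_mul (Nat.gcd_dvd_right d a) (Nat.gcd_dvd_right e s))
    refine Nat.dvd_gcd ?_ (Nat.dvd_gcd L4 L5)
    rw [← Nat.gcd_mul_left d (Nat.gcd e r) s, ← Nat.gcd_mul_left d e r]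
    exact Nat.dvd_gcd (Nat.dvd_gcd L1 L2) L3
  · have R1 : Nat.gcd (d * Nat.gcd (Nat.gcd e r) s) (Nat.gcd (e * Nat.gcd d a) (a * s)) ∣ d * e :=
      (Nat.gcd_dvd_left _ _).trans
        (mul_dvd_mul_left d ((Nat.gcd_dvd_left _ _).trans (Nat.gcd_dvd_left e r)))
    have R2 : Nat.gcd (d * Nat.gcd (Nat.gcd e r) s) (Nat.gcd (e * Nat.gcd d a) (a * s)) ∣ d * s :=
      (Nat.gcd_dvd_left _ _).trans (mul_dvd_mul_left d (Nat.gcd_dvd_right _ s))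
    have R3 : Nat.gcd (d * Nat.gcd (Nat.gcd e r) s) (Nat.gcd (e * Nat.gcd d a) (a * s)) ∣ r * d := by
      rw [mul_comm r d]
      exact (Nat.gcd_dvd_left _ _).trans
        (mul_dvd_mul_left d ((Nat.gcd_dvd_left _ _).trans (Nat.gcd_dvd_right e r)))
    have R4 : Nat.gcd (d * Nat.gcd (Nat.gcd e r) s) (Nat.gcd (e * Nat.gcd d a) (a * s)) ∣ a * e := by
      rw [mul_comm a e]
      exact (Nat.gcd_dvd_right _ _).trans
        ((Nat.gcd_dvd_left _ _).trans (mul_dvd_mul_left e (Nat.gcd_dvd_right d a)))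
    have R5 : Nat.gcd (d * Nat.gcd (Nat.gcd e r) s) (Nat.gcd (e * Nat.gcd d a) (a * s)) ∣ a * s :=
      (Nat.gcd_dvd_right _ _).trans (Nat.gcd_dvd_right _ _)
    refine Nat.dvd_gcd ?_ R3
    rw [← Nat.gcd_mul_right d (Nat.gcd e s) a, ← Nat.gcd_mul_left d e s, ← Nat.gcd_mul_left a e s]
    exact Nat.dvd_gcd (Nat.dvd_gcd R1 R2) (Nat.dvd_gcd R4 R5)


private lemma cnt_base (d e : ℕ) (hd : 0 < d) (he : 0 < e) (a r s : ℤ) :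
    cnt d e a r 0 s = gfun d e a r 0 s := by
  have hene : (e:ℤ) ≠ 0 := by exact_mod_cast he.ne'
  have hgpos : 0 < Int.gcd (e:ℤ) s := Int.gcd_pos_of_ne_zero_left s hene
  rw [cnt_b0 d e hd he a r s, cnt_b0s0 d (Int.gcd (e:ℤ) s) hd hgpos a r]
  unfold gfun
  simp only [Int.gcd, Int.natAbs_natCast, Int.natAbs_mul, zero_mul, sub_zero, mul_zero,
    Int.natAbs_zero, Nat.gcd_zero_right]
  exact gcd_identity d e a.natAbs r.natAbs s.natAbs

private lemma cnt_eq_gfun (d e : ℕ) (hd : 0 < d) (he : 0 < e) :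
    ∀ b a r s : ℤ, cnt d e a r b s = gfun d e a r b s := by
  suffices H : ∀ n : ℕ, ∀ b a r s : ℤ, b.natAbs = n → cnt d e a r b s = gfun d e a r b s by
    exact fun b a r s => H b.natAbs b a r s rfl
  intro n
  induction n using Nat.strong_induction_on with
  | _ n ih =>
    intro b a r s hbn
    by_cases hb : b = 0
    · subst hb; exact cnt_base d e hd he a r s
    · have hq : a % b = a + (-(a/b))*b := by rw [Int.emod_def]; ring
      have hlt : (a + (-(a/b))*b).natAbs < n := by
        rw [← hq, ← hbn]
        have h1 : 0 ≤ a % b := Int.emod_nonneg a hb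
        have h2 : a % b < |b| := Int.emod_lt_abs a hb
        have h3 : |b| = (b.natAbs:ℤ) := Int.abs_eq_natAbs b
        omega
      calc cnt d e a r b s = cnt d e b s a r := cnt_swap d e a r b s
        _ = cnt d e b s (a + (-(a/b))*b) (r + (-(a/b))*s) :=
            (cnt_rowadd d e b s a r (-(a/b))).symm
        _ = gfun d e b s (a + (-(a/b))*b) (r + (-(a/b))*s) :=
            ih _ hlt _ _ _ _ rfl
        _ = gfun d e b s a r := gfun_rowadd d e b s a r (-(a/b))
        _ = gfun d e a r b s := (gfun_swap d e a r b s).symm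

private lemma card_complex (d e : ℕ) (hd : 0 < d) (he : 0 < e) (a b r s : ℤ) :
    Nat.card {p : ℂ × ℂ // p.1 ^ d = 1 ∧ p.2 ^ e = 1 ∧
        p.1 ^ a * p.2 ^ r = 1 ∧ p.1 ^ b * p.2 ^ s = 1} = cnt d e a r b s := by
  have hde : d * e ≠ 0 := by positivity
  set θ : ℂ := Complex.exp (2 * ↑Real.pi * Complex.I / (↑(d*e) : ℂ)) with hθdef
  have hθ : IsPrimitiveRoot θ (d*e) := Complex.isPrimitiveRoot_exp _ hde
  have hθne : θ ≠ 0 := hθ.ne_zero hde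
  have key : ∀ u : ℤ, θ ^ u = 1 ↔ ((d*e:ℕ):ℤ) ∣ u := fun u => hθ.zpow_eq_one_iff_dvd u
  have hdz : ((d:ℤ)) ≠ 0 := by exact_mod_cast hd.ne'
  have hez : ((e:ℤ)) ≠ 0 := by exact_mod_cast he.ne'
  -- the two components as zpow conditions
  have hc1 : ∀ x y : ℕ, (θ ^ ((e:ℤ)*x)) ^ d = 1 := by
    intro x y
    rw [← zpow_natCast (θ ^ ((e:ℤ)*x)) d, ← zpow_mul, key]
    exact ⟨x, by push_cast; ring⟩
  have hc2 : ∀ y : ℕ, (θ ^ ((d:ℤ)*y)) ^ e = 1 := by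
    intro y
    rw [← zpow_natCast (θ ^ ((d:ℤ)*y)) e, ← zpow_mul, key]
    exact ⟨y, by push_cast; ring⟩
  have hc3 : ∀ (u v : ℤ) (x y : ℕ), (θ ^ ((e:ℤ)*x)) ^ u * (θ ^ ((d:ℤ)*y)) ^ v = 1 ↔
      ((d*e:ℕ):ℤ) ∣ u*e*x + v*d*y := by
    intro u v x y
    rw [← zpow_mul, ← zpow_mul, ← zpow_add₀ hθne, key,
      show (e:ℤ)*x*u + (d:ℤ)*y*v = u*e*x + v*d*y by ring]
  have hmem : ∀ p : ℕ × ℕ, p ∈ ((Finset.range d ×ˢ Finset.range e).filter fun p =>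
      ((d*e : ℤ) ∣ a*e*p.1 + r*d*p.2) ∧ ((d*e : ℤ) ∣ b*e*p.1 + s*d*p.2)) →
      ((θ ^ ((e:ℤ)*p.1), θ ^ ((d:ℤ)*p.2)) : ℂ × ℂ).1 ^ d = 1 ∧
      ((θ ^ ((e:ℤ)*p.1), θ ^ ((d:ℤ)*p.2)) : ℂ × ℂ).2 ^ e = 1 ∧
      ((θ ^ ((e:ℤ)*p.1), θ ^ ((d:ℤ)*p.2)) : ℂ × ℂ).1 ^ a *
        ((θ ^ ((e:ℤ)*p.1), θ ^ ((d:ℤ)*p.2)) : ℂ × ℂ).2 ^ r = 1 ∧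
      ((θ ^ ((e:ℤ)*p.1), θ ^ ((d:ℤ)*p.2)) : ℂ × ℂ).1 ^ b *
        ((θ ^ ((e:ℤ)*p.1), θ ^ ((d:ℤ)*p.2)) : ℂ × ℂ).2 ^ s = 1 := by
    intro p hp
    simp only [Finset.mem_filter, Finset.mem_product, Finset.mem_range] at hp
    obtain ⟨⟨hx, hy⟩, h3, h4⟩ := hp
    refine ⟨hc1 p.1 p.2, hc2 p.2, ?_, ?_⟩
    · rw [hc3 a r p.1 p.2]; exact_mod_cast h3
    · rw [hc3 b s p.1 p.2]; exact_mod_cast h4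
  unfold cnt
  rw [← Nat.card_eq_finsetCard]
  symm
  apply Nat.card_congr
  refine Equiv.ofBijective (fun q => ⟨((θ ^ ((e:ℤ)*(q:ℕ×ℕ).1), θ ^ ((d:ℤ)*(q:ℕ×ℕ).2)) : ℂ × ℂ),
    hmem q.1 q.2⟩) ⟨?_, ?_⟩
  · -- injective
    rintro ⟨p, hp⟩ ⟨p', hp'⟩ hfeq
    simp only [Finset.mem_filter, Finset.mem_product, Finset.mem_range] at hp hp'
    rw [Subtype.mk_eq_mk, Prod.ext_iff] at hfeq
    obtain ⟨hf1, hf2⟩ := hfeq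
    dsimp only at hf1 hf2
    have hxeq : p.1 = p'.1 := by
      have h0 : θ ^ ((e:ℤ)*p.1 - (e:ℤ)*p'.1) = 1 := by
        rw [zpow_sub₀ hθne, hf1, div_self (zpow_ne_zero _ hθne)]
      rw [key] at h0
      have h1 : ((d:ℤ)) ∣ ((p.1:ℤ) - (p'.1:ℤ)) := by
        have h2 : ((e:ℤ)) * (d:ℤ) ∣ (e:ℤ) * ((p.1:ℤ) - (p'.1:ℤ)) := by
          rw [show (e:ℤ) * ((p.1:ℤ) - (p'.1:ℤ)) = (e:ℤ)*p.1 - (e:ℤ)*p'.1 by ring]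
          refine dvd_trans (dvd_of_eq ?_) h0
          push_cast; ring
        exact (mul_dvd_mul_iff_left hez).mp h2
      have h3 : ((p.1:ℤ) - (p'.1:ℤ)) = 0 := by
        refine Int.eq_zero_of_abs_lt_dvd h1 ?_
        have := hp.1.1; have := hp'.1.1
        rw [abs_sub_lt_iff]
        constructor <;> [skip; skip] <;> push_cast <;> omega
      omega
    have hyeq : p.2 = p'.2 := by
      have h0 : θ ^ ((d:ℤ)*p.2 - (d:ℤ)*p'.2) = 1 := by
        rw [zpow_sub₀ hθne, hf2, div_self (zpow_ne_zero _ hθne)]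
      rw [key] at h0
      have h1 : ((e:ℤ)) ∣ ((p.2:ℤ) - (p'.2:ℤ)) := by
        have h2 : ((d:ℤ)) * (e:ℤ) ∣ (d:ℤ) * ((p.2:ℤ) - (p'.2:ℤ)) := by
          rw [show (d:ℤ) * ((p.2:ℤ) - (p'.2:ℤ)) = (d:ℤ)*p.2 - (d:ℤ)*p'.2 by ring]
          refine dvd_trans (dvd_of_eq ?_) h0
          push_cast; ring
        exact (mul_dvd_mul_iff_left hdz).mp h2
      have h3 : ((p.2:ℤ) - (p'.2:ℤ)) = 0 := by
        refine Int.eq_zero_of_abs_lt_dvd h1 ?_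
        have := hp.1.2; have := hp'.1.2
        rw [abs_sub_lt_iff]
        constructor <;> push_cast <;> omega
      omega
    exact Subtype.ext (Prod.ext hxeq hyeq)
  · -- surjective
    rintro ⟨⟨ξ, η⟩, h1, h2, h3, h4⟩
    haveI : NeZero d := ⟨hd.ne'⟩
    haveI : NeZero e := ⟨he.ne'⟩
    have hζ : IsPrimitiveRoot (θ ^ e) d := hθ.pow (Nat.pos_of_ne_zero hde) (mul_comm d e)
    have hω : IsPrimitiveRoot (θ ^ d) e := hθ.pow (Nat.pos_of_ne_zero hde) rfl
    simp only at h1 h2 h3 h4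
    obtain ⟨x, hxlt, hxi⟩ := hζ.eq_pow_of_pow_eq_one h1
    obtain ⟨y, hylt, hyi⟩ := hω.eq_pow_of_pow_eq_one h2
    have hxi' : θ ^ ((e:ℤ)*x) = ξ := by
      rw [← hxi, ← pow_mul, ← zpow_natCast θ (e*x)]
      push_cast; ring_nf
    have hyi' : θ ^ ((d:ℤ)*y) = η := by
      rw [← hyi, ← pow_mul, ← zpow_natCast θ (d*y)]
      push_cast; ring_nf
    have hmem2 : ((x, y) : ℕ × ℕ) ∈ ((Finset.range d ×ˢ Finset.range e).filter fun p =>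
        ((d*e : ℤ) ∣ a*e*p.1 + r*d*p.2) ∧ ((d*e : ℤ) ∣ b*e*p.1 + s*d*p.2)) := by
      simp only [Finset.mem_filter, Finset.mem_product, Finset.mem_range]
      refine ⟨⟨hxlt, hylt⟩, ?_, ?_⟩
      · have := (hc3 a r x y).mp (by rw [hxi', hyi']; exact h3)
        exact_mod_cast this
      · have := (hc3 b s x y).mp (by rw [hxi', hyi']; exact h4)
        exact_mod_cast this
    exact ⟨⟨(x, y), hmem2⟩, Subtype.ext (Prod.ext hxi' hyi')⟩


/-- The degree of the natural projection `ℂ² → X((d;a,b),(e;r,s))`, i.e. the index in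
`μ_d × μ_e` of the kernel `K = {(ξ,η) | ξ^a η^r = 1, ξ^b η^s = 1}` of the action, equals
`d·e / gcd(d·gcd(e,r,s), e·gcd(d,a,b), a·s − b·r)`. -/
theorem degree_projection_X_two_rows (d e : ℕ) (hd : 0 < d) (he : 0 < e)
    (a b r s : ℤ) :
    (d * e) / Nat.card {p : ℂ × ℂ // p.1 ^ d = 1 ∧ p.2 ^ e = 1 ∧
        p.1 ^ a * p.2 ^ r = 1 ∧ p.1 ^ b * p.2 ^ s = 1} =
    (d * e) / Nat.gcd (d * Int.gcd (Int.gcd (e : ℤ) r) s)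
        (Nat.gcd (e * Int.gcd (Int.gcd (d : ℤ) a) b) (Int.natAbs (a * s - b * r))) := by
  rw [card_complex d e hd he a b r s, cnt_eq_gfun d e hd he b a r s]
  rfl
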